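/- Let c be a random cluster drawn from the true clustering 𝒞 with probability proportional to positive weights p_c, and let β > 0. Then the pairwise F-score satisfies F_β = E[|c|(|c|−1−UCE(c))/p_c] / E[|c|(|c|−1 + SDE(c)/(1+β²))/p_c], provided both precision and recall are well defined and positive. -/

import Mathlib

open Finset Filter Topology

/-- A clustering (partition) of a finite type of records, given by the block
containing each record. -/
structure Clustering (R : Type*) [Fintype R] [DecidableEq R] where
  blk : R → Finset R
  mem_blk : ∀ r, r ∈ blk r
  blk_eq : ∀ r r', r' ∈ blk r → blk r' = blk r

namespace Clustering

variable {R : Type*} [Fintype R] [DecidableEq R]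

/-- The set of clusters (blocks) of the clustering. -/
def clusters (C : Clustering R) : Finset (Finset R) :=
  Finset.univ.image C.blk

/-- The set of unordered pairs of distinct records lying in the same block. -/
def pairs (C : Clustering R) : Set (Sym2 R) :=
  {s | ¬ s.IsDiag ∧ ∀ a b : R, s = s(a, b) → a ∈ C.blk b}

/-- Expectation of `f (c)` when a random cluster `c` is drawn from `C.clusters`
with probability proportional to the positive weights `p`. -/
noncomputable def expect (C : Clustering R) (p : Finset R → ℝ) (f : Finset R → ℝ) : ℝ :=
  ∑ c ∈ C.clusters, (p c / ∑ c' ∈ C.clusters, p c') * f c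

end Clustering

section Metrics

variable {R : Type*} [Fintype R] [DecidableEq R]

/-- Record-wise underclustering error `UCE(r) = |c(r) \ ĉ(r)|`. -/
noncomputable def UCE (C Ch : Clustering R) (r : R) : ℝ := ((C.blk r) \ (Ch.blk r)).card

/-- Record-wise overclustering error `OCE(r) = |ĉ(r) \ c(r)|`. -/
noncomputable def OCE (C Ch : Clustering R) (r : R) : ℝ := ((Ch.blk r) \ (C.blk r)).card

/-- Record-wise size difference error `SDE(r) = |ĉ(r)| - |c(r)|`. -/
noncomputable def SDE (C Ch : Clustering R) (r : R) : ℝ :=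
  ((Ch.blk r).card : ℝ) - ((C.blk r).card : ℝ)

/-- Record-wise relative overclustering error. -/
noncomputable def ROCE (C Ch : Clustering R) (r : R) : ℝ := OCE C Ch r / ((Ch.blk r).card : ℝ)

/-- Record-wise relative underclustering error. -/
noncomputable def RUCE (C Ch : Clustering R) (r : R) : ℝ := UCE C Ch r / ((C.blk r).card : ℝ)

/-- Record-wise error indicator. -/
noncomputable def EI (C Ch : Clustering R) (r : R) : ℝ := if Ch.blk r = C.blk r then 0 else 1

/-- Cluster-wise average of a record-wise error metric:
`E(c) = (1/|c|) ∑_{r ∈ c} E(r)`. -/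
noncomputable def clAvg (E : R → ℝ) (c : Finset R) : ℝ := (1 / (c.card : ℝ)) * ∑ r ∈ c, E r

end Metrics

/-- Pairwise precision `P = |T ∩ P| / |P|`. -/
noncomputable def pairwisePrecision {R : Type*} [Fintype R] [DecidableEq R]
    (C Ch : Clustering R) : ℝ :=
  ((C.pairs ∩ Ch.pairs).ncard : ℝ) / (Ch.pairs.ncard : ℝ)

/-- Pairwise recall `R = |T ∩ P| / |T|`. -/
noncomputable def pairwiseRecall {R : Type*} [Fintype R] [DecidableEq R]
    (C Ch : Clustering R) : ℝ :=
  ((C.pairs ∩ Ch.pairs).ncard : ℝ) / (C.pairs.ncard : ℝ)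

section AuxCount
variable {R : Type*} [Fintype R] [DecidableEq R]

/-- Auxiliary: the set of non-diagonal unordered pairs compatible with `D`. -/
def sympairs (D : R → Finset R) : Set (Sym2 R) :=
  {s | ¬ s.IsDiag ∧ ∀ a b : R, s = s(a, b) → a ∈ D b}

/-- Auxiliary: the corresponding finset of ordered pairs. -/
def pairFinset (D : R → Finset R) : Finset (R × R) :=
  Finset.univ.filter (fun x : R × R => x.1 ≠ x.2 ∧ x.1 ∈ D x.2)

lemma sympairs_eq_image (D : R → Finset R) (hsym : ∀ a b, a ∈ D b → b ∈ D a) :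
    sympairs D = ↑((pairFinset D).image Sym2.mk.uncurry) := by
  ext s
  induction s using Sym2.ind with
  | _ x y =>
    simp only [sympairs, Set.mem_setOf_eq, Finset.coe_image, Set.mem_image,
      Finset.mem_coe, pairFinset, Finset.mem_filter, Finset.mem_univ, true_and,
      Sym2.mk_isDiag_iff, Function.uncurry_apply_pair]
    constructor
    · rintro ⟨hxy, h⟩
      exact ⟨(x, y), ⟨hxy, h x y rfl⟩, rfl⟩
    · rintro ⟨⟨a, b⟩, ⟨hab, hmem⟩, heq⟩
      rw [Function.uncurry_apply_pair] at heq
      rw [Sym2.eq_iff] at heq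
      rcases heq with ⟨rfl, rfl⟩ | ⟨rfl, rfl⟩
      · refine ⟨hab, fun a' b' h' => ?_⟩
        rw [Sym2.eq_iff] at h'
        rcases h' with ⟨rfl, rfl⟩ | ⟨rfl, rfl⟩
        · exact hmem
        · exact hsym _ _ hmem
      · refine ⟨Ne.symm hab, fun a' b' h' => ?_⟩
        rw [Sym2.eq_iff] at h'
        rcases h' with ⟨rfl, rfl⟩ | ⟨rfl, rfl⟩
        · exact hsym _ _ hmem
        · exact hmem

lemma card_pairFinset (D : R → Finset R) :
    (pairFinset D).card = ∑ b : R, ((D b).erase b).card := by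
  rw [Finset.card_eq_sum_card_fiberwise (f := Prod.snd) (t := Finset.univ)
    (fun x _ => Finset.mem_univ _)]
  refine Finset.sum_congr rfl fun b _ => ?_
  rw [show ((pairFinset D).filter (fun x => Prod.snd x = b))
      = ((D b).erase b).image (fun a => (a, b)) from ?_]
  · exact Finset.card_image_of_injective _ (fun x y h => congrArg Prod.fst h)
  · ext ⟨c, d⟩
    simp only [Finset.mem_filter, pairFinset, Finset.mem_univ, true_and,
      Finset.mem_image, Finset.mem_erase, Prod.mk.injEq]
    constructor
    · rintro ⟨⟨h1, h2⟩, rfl⟩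
      exact ⟨c, ⟨h1, h2⟩, rfl, rfl⟩
    · rintro ⟨a, ⟨h1, h2⟩, rfl, rfl⟩
      exact ⟨⟨h1, h2⟩, rfl⟩

lemma card_pairFinset_eq_two_mul (D : R → Finset R) (hsym : ∀ a b, a ∈ D b → b ∈ D a) :
    (pairFinset D).card = 2 * ((pairFinset D).image Sym2.mk.uncurry).card := by
  rw [Finset.card_eq_sum_card_fiberwise (f := Sym2.mk.uncurry) (t := (pairFinset D).image Sym2.mk.uncurry)
    (fun x hx => Finset.mem_image_of_mem _ hx),
    Finset.sum_congr rfl (g := fun _ => 2), Finset.sum_const, smul_eq_mul, mul_comm]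
  intro s hs
  obtain ⟨⟨a, b⟩, hab, rfl⟩ := Finset.mem_image.mp hs
  simp only [pairFinset, Finset.mem_filter, Finset.mem_univ, true_and] at hab
  rw [show (pairFinset D).filter (fun x => Sym2.mk.uncurry x = Sym2.mk.uncurry (a, b)) = {(a, b), (b, a)} from ?_]
  · exact Finset.card_pair (by simp [Prod.ext_iff]; exact fun h => absurd h hab.1)
  · ext ⟨c, d⟩
    rw [Finset.mem_filter]
    simp only [Finset.mem_filter, pairFinset, Finset.mem_univ, true_and,
      Finset.mem_insert, Finset.mem_singleton, Prod.mk.injEq, Function.uncurry_apply_pair, Sym2.eq_iff]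
    constructor
    · rintro ⟨-, h⟩; tauto
    · rintro (⟨rfl, rfl⟩ | ⟨rfl, rfl⟩)
      · exact ⟨⟨hab.1, hab.2⟩, Or.inl ⟨rfl, rfl⟩⟩
      · exact ⟨⟨Ne.symm hab.1, hsym _ _ hab.2⟩, Or.inr ⟨rfl, rfl⟩⟩

lemma two_mul_ncard (D : R → Finset R) (hsym : ∀ a b, a ∈ D b → b ∈ D a)
    (hmem : ∀ r, r ∈ D r) :
    2 * ((sympairs D).ncard : ℝ) = ∑ r : R, (((D r).card : ℝ) - 1) := by
  have h1 : (sympairs D).ncard = ((pairFinset D).image Sym2.mk.uncurry).card := by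
    rw [sympairs_eq_image D hsym, Set.ncard_coe_finset]
  have h2 := card_pairFinset_eq_two_mul D hsym
  have h3 := card_pairFinset D
  have key : ((pairFinset D).card : ℝ) = ∑ r : R, (((D r).card : ℝ) - 1) := by
    rw [h3, Nat.cast_sum]
    refine Finset.sum_congr rfl fun b _ => ?_
    rw [Finset.card_erase_of_mem (hmem b),
      Nat.cast_sub (Finset.card_pos.mpr ⟨b, hmem b⟩), Nat.cast_one]
  rw [h1, ← key, h2]
  push_cast
  ring

lemma blk_symm (C : Clustering R) {a b : R} (h : a ∈ C.blk b) : b ∈ C.blk a := by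
  rw [C.blk_eq b a h]; exact C.mem_blk b

lemma blk_eq_of_mem (C : Clustering R) {c : Finset R} (hc : c ∈ C.clusters)
    {r : R} (hr : r ∈ c) : C.blk r = c := by
  obtain ⟨r0, -, rfl⟩ := Finset.mem_image.mp hc
  exact C.blk_eq r0 r hr

lemma sum_clusters (C : Clustering R) (g : R → ℝ) :
    ∑ c ∈ C.clusters, ∑ r ∈ c, g r = ∑ r : R, g r := by
  rw [← Finset.sum_fiberwise_of_maps_to
    (fun r _ => Finset.mem_image_of_mem C.blk (Finset.mem_univ r)) g]
  refine Finset.sum_congr rfl fun c hc => ?_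
  refine Finset.sum_congr ?_ fun _ _ => rfl
  ext r
  simp only [Finset.mem_filter, Finset.mem_univ, true_and]
  constructor
  · exact fun hr => blk_eq_of_mem C hc hr
  · intro h; rw [← h]; exact C.mem_blk r

lemma pairs_eq_sympairs (C : Clustering R) : C.pairs = sympairs C.blk := rfl

lemma pairs_inter_eq (C Ch : Clustering R) :
    C.pairs ∩ Ch.pairs = sympairs (fun r => C.blk r ∩ Ch.blk r) := by
  ext s
  simp only [Set.mem_inter_iff, Clustering.pairs, Set.mem_setOf_eq, sympairs,
    Finset.mem_inter]
  constructor
  · rintro ⟨⟨h1, h2⟩, ⟨-, h3⟩⟩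
    exact ⟨h1, fun a b hab => ⟨h2 a b hab, h3 a b hab⟩⟩
  · rintro ⟨h1, h2⟩
    exact ⟨⟨h1, fun a b hab => (h2 a b hab).1⟩, ⟨h1, fun a b hab => (h2 a b hab).2⟩⟩

end AuxCount

/-- Lemma 2: representation of the pairwise F-score. -/
theorem pairwise_fscore_representation
    {R : Type*} [Fintype R] [DecidableEq R]
    (C Ch : Clustering R) (p : Finset R → ℝ)
    (hp : ∀ c ∈ C.clusters, 0 < p c)
    (β : ℝ) (hβ : 0 < β)
    (hPpos : 0 < pairwisePrecision C Ch) (hRpos : 0 < pairwiseRecall C Ch) :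
    (((pairwisePrecision C Ch)⁻¹ + β ^ 2 * (pairwiseRecall C Ch)⁻¹) / (1 + β ^ 2))⁻¹ =
      C.expect p (fun c => (c.card : ℝ) * ((c.card : ℝ) - 1 - clAvg (UCE C Ch) c) / p c) /
        C.expect p
          (fun c => (c.card : ℝ) * ((c.card : ℝ) - 1 + clAvg (SDE C Ch) c / (1 + β ^ 2)) / p c) := by
  classical
  have hβ2 : (0 : ℝ) < 1 + β ^ 2 := by positivity
  set T : ℝ := (C.pairs.ncard : ℝ) with hTdef
  set Pn : ℝ := (Ch.pairs.ncard : ℝ) with hPndef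
  set I : ℝ := ((C.pairs ∩ Ch.pairs).ncard : ℝ) with hIdef
  -- counting identities
  have hT : 2 * T = ∑ r : R, (((C.blk r).card : ℝ) - 1) := by
    rw [hTdef, pairs_eq_sympairs]
    exact two_mul_ncard _ (fun a b h => blk_symm C h) C.mem_blk
  have hPn : 2 * Pn = ∑ r : R, (((Ch.blk r).card : ℝ) - 1) := by
    rw [hPndef, pairs_eq_sympairs]
    exact two_mul_ncard _ (fun a b h => blk_symm Ch h) Ch.mem_blk
  have hI : 2 * I = ∑ r : R, ((((C.blk r) ∩ (Ch.blk r)).card : ℝ) - 1) := by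
    rw [hIdef, pairs_inter_eq]
    exact two_mul_ncard _
      (fun a b h => Finset.mem_inter.mpr
        ⟨blk_symm C (Finset.mem_inter.mp h).1, blk_symm Ch (Finset.mem_inter.mp h).2⟩)
      (fun r => Finset.mem_inter.mpr ⟨C.mem_blk r, Ch.mem_blk r⟩)
  -- positivity of the counts
  have hprec : 0 < I / Pn := hPpos
  have hrec : 0 < I / T := hRpos
  have hI0 : 0 < I := by
    rcases div_pos_iff.mp hprec with ⟨h, _⟩ | ⟨h, _⟩
    · exact h
    · exact absurd h (not_lt.mpr (by positivity))
  have hPn0 : 0 < Pn := by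
    rcases div_pos_iff.mp hprec with ⟨_, h⟩ | ⟨_, h⟩
    · exact h
    · exact absurd h (not_lt.mpr (by positivity))
  have hT0 : 0 < T := by
    rcases div_pos_iff.mp hrec with ⟨_, h⟩ | ⟨_, h⟩
    · exact h
    · exact absurd h (not_lt.mpr (by positivity))
  -- the clusters are nonempty
  have hRne : (Finset.univ : Finset R).Nonempty := by
    by_contra h
    rw [Finset.not_nonempty_iff_eq_empty] at h
    rw [h, Finset.sum_empty] at hT
    linarith
  obtain ⟨r0, -⟩ := hRne
  have hclne : C.clusters.Nonempty := ⟨C.blk r0, Finset.mem_image_of_mem _ (Finset.mem_univ r0)⟩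
  set Z : ℝ := ∑ c' ∈ C.clusters, p c' with hZdef
  have hZ0 : 0 < Z := Finset.sum_pos hp hclne
  -- rewriting the expectations
  have hexp : ∀ f : Finset R → ℝ,
      C.expect p (fun c => f c / p c) = (∑ c ∈ C.clusters, f c) / Z := by
    intro f
    unfold Clustering.expect
    rw [Finset.sum_div]
    refine Finset.sum_congr rfl fun c hc => ?_
    have hpc : p c ≠ 0 := (hp c hc).ne'
    field_simp
    rw [← hZdef, mul_div_cancel_right₀ _ hZ0.ne']
  -- the numerator sum
  have hnum : ∑ c ∈ C.clusters, (c.card : ℝ) * ((c.card : ℝ) - 1 - clAvg (UCE C Ch) c)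
      = 2 * I := by
    have hterm : ∀ c ∈ C.clusters,
        (c.card : ℝ) * ((c.card : ℝ) - 1 - clAvg (UCE C Ch) c)
        = ∑ r ∈ c, ((((C.blk r) ∩ (Ch.blk r)).card : ℝ) - 1) := by
      intro c hc
      have hcne : c.Nonempty := by
        obtain ⟨r1, -, h⟩ := Finset.mem_image.mp hc
        exact ⟨r1, h ▸ C.mem_blk r1⟩
      have hc0 : ((c.card : ℝ)) ≠ 0 := by
        exact_mod_cast (Finset.card_pos.mpr hcne).ne'
      have havg : (c.card : ℝ) * clAvg (UCE C Ch) c = ∑ r ∈ c, UCE C Ch r := by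
        unfold clAvg
        field_simp
      have hterm2 : ∀ r ∈ c, (((C.blk r ∩ Ch.blk r).card : ℝ)) - 1
          = ((c.card : ℝ) - 1) - UCE C Ch r := by
        intro r hr
        have hbr : C.blk r = c := blk_eq_of_mem C hc hr
        have h2 : ((C.blk r ∩ Ch.blk r).card : ℝ) + UCE C Ch r = ((C.blk r).card : ℝ) := by
          unfold UCE
          exact_mod_cast Finset.card_inter_add_card_sdiff (C.blk r) (Ch.blk r)
        rw [hbr] at h2 ⊢
        linarith
      rw [Finset.sum_congr rfl hterm2, Finset.sum_sub_distrib, Finset.sum_const,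
        nsmul_eq_mul, mul_sub, havg]
    rw [Finset.sum_congr rfl hterm, sum_clusters, ← hI]
  -- the denominator sum
  have hSDE : ∑ r : R, SDE C Ch r = 2 * Pn - 2 * T := by
    have h : ∀ r : R, SDE C Ch r
        = ((((Ch.blk r).card : ℝ) - 1)) - (((C.blk r).card : ℝ) - 1) := by
      intro r; unfold SDE; ring
    rw [Finset.sum_congr rfl (fun r _ => h r), Finset.sum_sub_distrib, ← hPn, ← hT]
  have hden : ∑ c ∈ C.clusters,
        (c.card : ℝ) * ((c.card : ℝ) - 1 + clAvg (SDE C Ch) c / (1 + β ^ 2))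
      = 2 * T + (2 * Pn - 2 * T) / (1 + β ^ 2) := by
    have hterm : ∀ c ∈ C.clusters,
        (c.card : ℝ) * ((c.card : ℝ) - 1 + clAvg (SDE C Ch) c / (1 + β ^ 2))
        = ∑ r ∈ c, ((((C.blk r).card : ℝ) - 1) + SDE C Ch r / (1 + β ^ 2)) := by
      intro c hc
      have hcne : c.Nonempty := by
        obtain ⟨r1, -, h⟩ := Finset.mem_image.mp hc
        exact ⟨r1, h ▸ C.mem_blk r1⟩
      have hc0 : ((c.card : ℝ)) ≠ 0 := by
        exact_mod_cast (Finset.card_pos.mpr hcne).ne'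
      have havg : (c.card : ℝ) * clAvg (SDE C Ch) c = ∑ r ∈ c, SDE C Ch r := by
        unfold clAvg
        field_simp
      have hterm2 : ∀ r ∈ c, ((((C.blk r).card : ℝ) - 1) + SDE C Ch r / (1 + β ^ 2))
          = (((c.card : ℝ)) - 1) + SDE C Ch r / (1 + β ^ 2) := by
        intro r hr
        rw [blk_eq_of_mem C hc hr]
      rw [Finset.sum_congr rfl hterm2, Finset.sum_add_distrib, Finset.sum_const,
        nsmul_eq_mul, ← Finset.sum_div, ← havg, mul_add, ← mul_div_assoc]
    rw [Finset.sum_congr rfl hterm, sum_clusters, Finset.sum_add_distrib,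
      ← Finset.sum_div, hSDE, ← hT]
  -- put everything together
  rw [hexp (fun c => (c.card : ℝ) * ((c.card : ℝ) - 1 - clAvg (UCE C Ch) c)),
    hexp (fun c => (c.card : ℝ) * ((c.card : ℝ) - 1 + clAvg (SDE C Ch) c / (1 + β ^ 2))),
    hnum, hden]
  show (((I / Pn)⁻¹ + β ^ 2 * (I / T)⁻¹) / (1 + β ^ 2))⁻¹ = _
  have hZ' : Z ≠ 0 := hZ0.ne'
  have hS : Pn + β ^ 2 * T ≠ 0 := by positivity
  have hd : 2 * T + (2 * Pn - 2 * T) / (1 + β ^ 2)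
      = 2 * (Pn + β ^ 2 * T) / (1 + β ^ 2) := by
    field_simp
    ring
  have hD0 : 0 < 2 * T + (2 * Pn - 2 * T) / (1 + β ^ 2) := by
    rw [hd]
    positivity
  have hL : ((I / Pn)⁻¹ + β ^ 2 * (I / T)⁻¹) / (1 + β ^ 2)
      = (Pn + β ^ 2 * T) / (I * (1 + β ^ 2)) := by
    field_simp [hI0.ne', hPn0.ne', hT0.ne']
  have hcan : 2 * I / Z / ((2 * T + (2 * Pn - 2 * T) / (1 + β ^ 2)) / Z)
      = 2 * I / (2 * T + (2 * Pn - 2 * T) / (1 + β ^ 2)) := by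
    rw [div_div_div_comm, div_self hZ', div_one]
  rw [hcan, hd, hL, inv_div, div_div_eq_mul_div, div_eq_div_iff hS (by positivity)]
  ring
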